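/- In the two-mode squeezing toy model, the entanglement entropy S(t) = ln(cosh(t)²) − sinh(t)²·ln(tanh(t)²) has vanishing initial growth rate: the first derivative of S tends to 0 as t → 0⁺, i.e. Tendsto (fun t => deriv S t) (𝓝[>] 0) (𝓝 0). -/

import Mathlib

open Filter

open Real in
lemma aux_hasDerivAt (t : ℝ) (ht : 0 < t) :
    HasDerivAt (fun t => Real.log (Real.cosh t ^ 2)
        - Real.sinh t ^ 2 * Real.log (Real.tanh t ^ 2))
      (-(2 * Real.sinh t * Real.cosh t) * Real.log (Real.tanh t ^ 2)) t := by
  have hc : Real.cosh t ≠ 0 := (Real.cosh_pos t).ne'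
  have hs : Real.sinh t ≠ 0 := (Real.sinh_pos_iff.mpr ht).ne'
  have htanh : HasDerivAt Real.tanh (1 / Real.cosh t ^ 2) t := by
    have h := (Real.hasDerivAt_sinh t).div (Real.hasDerivAt_cosh t) hc
    have : Real.tanh = fun x => Real.sinh x / Real.cosh x := by
      funext x; exact Real.tanh_eq_sinh_div_cosh x
    rw [this]
    refine h.congr_deriv ?_
    rw [show Real.cosh t * Real.cosh t - Real.sinh t * Real.sinh t = 1 from by
      nlinarith [Real.cosh_sq_sub_sinh_sq t]]
  have h1 : HasDerivAt (fun t => Real.log (Real.cosh t ^ 2))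
      ((2 * Real.cosh t ^ 1 * Real.sinh t) / Real.cosh t ^ 2) t := by
    exact (((Real.hasDerivAt_cosh t).pow 2).log (pow_ne_zero 2 hc))
  have htn : Real.tanh t ≠ 0 := by
    rw [Real.tanh_eq_sinh_div_cosh]; exact div_ne_zero hs hc
  have h2 : HasDerivAt (fun t => Real.log (Real.tanh t ^ 2))
      ((2 * Real.tanh t ^ 1 * (1 / Real.cosh t ^ 2)) / Real.tanh t ^ 2) t :=
    (htanh.pow 2).log (pow_ne_zero 2 htn)
  have h3 := ((Real.hasDerivAt_sinh t).pow 2).mul h2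
  have h := h1.sub h3
  refine h.congr_deriv ?_
  rw [Real.tanh_eq_sinh_div_cosh]
  have h4 : Real.cosh t ^ 2 - Real.sinh t ^ 2 = 1 := Real.cosh_sq_sub_sinh_sq t
  simp only [Pi.pow_apply]
  field_simp
  ring

theorem two_mode_squeezing_entropy_deriv_tendsto_zero
    (S : ℝ → ℝ)
    (hS : ∀ t : ℝ, S t
      = Real.log (Real.cosh t ^ 2) - Real.sinh t ^ 2 * Real.log (Real.tanh t ^ 2)) :
    Tendsto (fun t : ℝ => deriv S t) (nhdsWithin 0 (Set.Ioi 0)) (nhds 0) := by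
  have hSfun : S = fun t => Real.log (Real.cosh t ^ 2)
      - Real.sinh t ^ 2 * Real.log (Real.tanh t ^ 2) := funext hS
  have hEq : ∀ᶠ t in nhdsWithin (0:ℝ) (Set.Ioi 0),
      deriv S t = -(2 * Real.sinh t * Real.cosh t) * Real.log (Real.tanh t ^ 2) := by
    filter_upwards [self_mem_nhdsWithin] with t ht
    rw [hSfun]
    exact (aux_hasDerivAt t ht).deriv
  rw [Filter.tendsto_congr' hEq]
  -- rewrite target expression for t > 0
  have hEq2 : ∀ᶠ t in nhdsWithin (0:ℝ) (Set.Ioi 0),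
      (-4 * Real.cosh t) * (Real.log (Real.sinh t) * Real.sinh t
        - Real.sinh t * Real.log (Real.cosh t))
      = -(2 * Real.sinh t * Real.cosh t) * Real.log (Real.tanh t ^ 2) := by
    filter_upwards [self_mem_nhdsWithin] with t ht
    have hs : 0 < Real.sinh t := Real.sinh_pos_iff.mpr ht
    have hc : 0 < Real.cosh t := Real.cosh_pos t
    have htp : 0 < Real.tanh t := by
      rw [Real.tanh_eq_sinh_div_cosh]; positivity
    rw [Real.log_pow, Real.tanh_eq_sinh_div_cosh, Real.log_div hs.ne' hc.ne']
    push_cast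
    ring
  rw [← Filter.tendsto_congr' hEq2]
  have hsinh_map : Tendsto Real.sinh (nhdsWithin (0:ℝ) (Set.Ioi 0))
      (nhdsWithin (0:ℝ) (Set.Ioi 0)) := by
    apply tendsto_nhdsWithin_of_tendsto_nhds_of_eventually_within
    · simpa using (Real.continuous_sinh.tendsto 0).mono_left nhdsWithin_le_nhds
    · filter_upwards [self_mem_nhdsWithin] with t ht
      exact Real.sinh_pos_iff.mpr ht
  have h1 : Tendsto (fun t => Real.log (Real.sinh t) * Real.sinh t)
      (nhdsWithin (0:ℝ) (Set.Ioi 0)) (nhds 0) := by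
    have := (tendsto_log_mul_rpow_nhdsGT_zero zero_lt_one).comp hsinh_map
    simpa [Function.comp_def, Real.rpow_one] using this
  have h2 : Tendsto (fun t => Real.sinh t * Real.log (Real.cosh t))
      (nhdsWithin (0:ℝ) (Set.Ioi 0)) (nhds 0) := by
    have : ContinuousAt (fun t => Real.sinh t * Real.log (Real.cosh t)) 0 := by
      exact (Real.continuous_sinh.continuousAt).mul
        ((Real.continuousAt_log (by simp [(Real.cosh_pos _).ne'])).comp
          Real.continuous_cosh.continuousAt)
    have := this.tendsto.mono_left (nhdsWithin_le_nhds (s := Set.Ioi 0))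
    simpa using this
  have h3 : Tendsto (fun t => (-4 * Real.cosh t)) (nhdsWithin (0:ℝ) (Set.Ioi 0))
      (nhds (-4)) := by
    have : ContinuousAt (fun t : ℝ => -4 * Real.cosh t) 0 :=
      (continuousAt_const).mul Real.continuous_cosh.continuousAt
    have := this.tendsto.mono_left (nhdsWithin_le_nhds (s := Set.Ioi 0))
    simpa using this
  have := h3.mul (h1.sub h2)
  simpa using this
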